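/- Let g, f, b ∈ ℝ⟦X⟧ with f having constant coefficient 0. Then for every n ∈ ℕ, coeff n (g·(b∘f)) = Σ_{k=0}^{n} (coeff k b)·(coeff n (g·f^k)). -/

import Mathlib

open PowerSeries

/-- Substitution (composition) of formal power series: `psComp g f = g ∘ f`,
the substitution of `f` into `g`.  When `f` has zero constant coefficient, the
`n`-th coefficient of `g ∘ f` is `∑_{k=0}^{n} g_k · [zⁿ] fᵏ`. -/
noncomputable def psComp (g f : PowerSeries ℝ) : PowerSeries ℝ :=
  PowerSeries.mk fun n => ∑ k ∈ Finset.range (n + 1),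
    PowerSeries.coeff k g * PowerSeries.coeff n (f ^ k)

lemma coeff_pow_zero_of_lt (f : PowerSeries ℝ) (hf0 : constantCoeff f = 0)
    {j k : ℕ} (h : j < k) : coeff j (f ^ k) = 0 := by
  have hX : (X : PowerSeries ℝ) ^ k ∣ f ^ k :=
    pow_dvd_pow_of_dvd (X_dvd_iff.mpr hf0) k
  exact (X_pow_dvd_iff.mp hX) j h

theorem stmt13 (g f b : PowerSeries ℝ) (hf0 : constantCoeff f = 0) (n : ℕ) :
    coeff n (g * psComp b f)
      = ∑ k ∈ Finset.range (n + 1), coeff k b * coeff n (g * f ^ k) := by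
  rw [coeff_mul]
  have hcomp : ∀ p ∈ Finset.HasAntidiagonal.antidiagonal n,
      coeff p.1 g * coeff p.2 (psComp b f)
        = ∑ k ∈ Finset.range (n + 1),
            coeff k b * (coeff p.1 g * coeff p.2 (f ^ k)) := by
    intro p hp
    have hp2 : p.2 ≤ n := by
      have := Finset.HasAntidiagonal.antidiagonal.snd_le hp
      omega
    simp only [psComp, coeff_mk]
    rw [Finset.sum_subset (Finset.range_subset_range.mpr (by omega : p.2 + 1 ≤ n + 1))]
    · rw [Finset.mul_sum]
      apply Finset.sum_congr rfl
      intro k _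
      ring
    · intro k _ hk
      simp only [Finset.mem_range, not_lt] at hk
      rw [coeff_pow_zero_of_lt f hf0 (by omega), mul_zero]
  rw [Finset.sum_congr rfl hcomp, Finset.sum_comm]
  apply Finset.sum_congr rfl
  intro k _
  rw [coeff_mul, Finset.mul_sum]
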